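/- Let Θ be a convex bounded subset of the positive orthant in R^d, α, β > 0, and Φ = {φ : φ_i = α + β θ_i, θ ∈ Θ}. Then for every w ∈ R^d, ‖w‖²_Φ = min_{z∈R^d} ( (1/α)‖w-z‖₂² + (1/β)‖z‖²_Θ ). -/

import Mathlib

open Filter

noncomputable def thetaNorm {d : ℕ} (Θ : Set (Fin d → ℝ)) (w : Fin d → ℝ) : ℝ :=
  Real.sqrt (⨅ θ : Θ, ∑ i, w i ^ 2 / (θ : Fin d → ℝ) i)

private lemma coord_ineq (w z a t : ℝ) (ha : 0 < a) (ht : 0 < t) :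
    w ^ 2 / (a + t) ≤ (w - z) ^ 2 / a + z ^ 2 / t := by
  rw [div_add_div _ _ ha.ne' ht.ne', div_le_div_iff₀ (by positivity) (by positivity)]
  nlinarith [sq_nonneg ((w - z) * t - z * a)]

private lemma coord_ineq' (w z a b t : ℝ) (ha : 0 < a) (hb : 0 < b) (ht : 0 < t) :
    w ^ 2 / (a + b * t) ≤ (1 / a) * (w - z) ^ 2 + (1 / b) * (z ^ 2 / t) := by
  have h := coord_ineq w z a (b * t) ha (by positivity)
  have e1 : (w - z) ^ 2 / a = (1 / a) * (w - z) ^ 2 := by ring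
  have e2 : z ^ 2 / (b * t) = (1 / b) * (z ^ 2 / t) := by
    rw [mul_comm b t, ← div_div]; ring
  linarith [h, e1, e2]

private lemma coord_eq (w a b t : ℝ) (ha : 0 < a) (hb : 0 < b) (ht : 0 ≤ t) :
    (1 / a) * (w - w * (b * t) / (a + b * t)) ^ 2
      + (1 / b) * ((w * (b * t) / (a + b * t)) ^ 2 / t) = w ^ 2 / (a + b * t) := by
  rcases eq_or_lt_of_le ht with h0 | h0
  · simp [← h0]
    ring
  · have hd : a + b * t ≠ 0 := by positivity
    field_simp
    ring

theorem phi_norm_moreau {d : ℕ} (Θ : Set (Fin d → ℝ)) (hne : Θ.Nonempty)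
    (hconv : Convex ℝ Θ) (hbdd : Bornology.IsBounded Θ)
    (hpos : ∀ θ ∈ Θ, ∀ i, 0 < θ i) (α β : ℝ) (hα : 0 < α) (hβ : 0 < β)
    (w : Fin d → ℝ) :
    IsLeast {x : ℝ | ∃ z : Fin d → ℝ,
        x = (1 / α) * ∑ i, (w i - z i) ^ 2 + (1 / β) * (thetaNorm Θ z) ^ 2}
      ((thetaNorm ((fun θ : Fin d → ℝ => fun i => α + β * θ i) '' Θ) w) ^ 2) := by
  classical
  haveI : Nonempty Θ := hne.to_subtype
  set Φ : Set (Fin d → ℝ) := (fun θ : Fin d → ℝ => fun i => α + β * θ i) '' Θ with hΦ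
  haveI : Nonempty Φ := (hne.image _).to_subtype
  set L : ℝ := ⨅ φ : Φ, ∑ i, w i ^ 2 / (φ : Fin d → ℝ) i with hLdef
  have hΦpos : ∀ φ ∈ Φ, ∀ i, 0 < φ i := by
    rintro φ ⟨θ, hθ, rfl⟩ i
    have := hpos θ hθ i
    positivity
  have hLnonneg : 0 ≤ L :=
    Real.iInf_nonneg fun φ => Finset.sum_nonneg fun i _ =>
      div_nonneg (sq_nonneg _) (hΦpos φ φ.2 i).le
  have hΦbdd : BddBelow (Set.range fun φ : Φ => ∑ i, w i ^ 2 / (φ : Fin d → ℝ) i) := by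
    refine ⟨0, ?_⟩
    rintro x ⟨φ, rfl⟩
    exact Finset.sum_nonneg fun i _ => div_nonneg (sq_nonneg _) (hΦpos φ φ.2 i).le
  have hsqΦ : (thetaNorm Φ w) ^ 2 = L := Real.sq_sqrt hLnonneg
  -- squared theta norm
  have hgnonneg : ∀ z : Fin d → ℝ, ∀ θ : Θ, 0 ≤ ∑ i, z i ^ 2 / (θ : Fin d → ℝ) i :=
    fun z θ => Finset.sum_nonneg fun i _ => div_nonneg (sq_nonneg _) (hpos θ θ.2 i).le
  have hgbdd : ∀ z : Fin d → ℝ,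
      BddBelow (Set.range fun θ : Θ => ∑ i, z i ^ 2 / (θ : Fin d → ℝ) i) := by
    intro z
    exact ⟨0, by rintro x ⟨θ, rfl⟩; exact hgnonneg z θ⟩
  have hsqΘ : ∀ z : Fin d → ℝ,
      (thetaNorm Θ z) ^ 2 = ⨅ θ : Θ, ∑ i, z i ^ 2 / (θ : Fin d → ℝ) i :=
    fun z => Real.sq_sqrt (le_ciInf (hgnonneg z))
  -- L ≤ value at each θ
  have hLle : ∀ θ : Fin d → ℝ, θ ∈ Θ → L ≤ ∑ i, w i ^ 2 / (α + β * θ i) := by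
    intro θ hθ
    have := ciInf_le hΦbdd (⟨fun i => α + β * θ i, ⟨θ, hθ, rfl⟩⟩ : Φ)
    simpa using this
  -- lower bound for every element of the set
  have lower : ∀ z : Fin d → ℝ,
      L ≤ (1 / α) * ∑ i, (w i - z i) ^ 2 + (1 / β) * (thetaNorm Θ z) ^ 2 := by
    intro z
    rw [hsqΘ z]
    set c : ℝ := (1 / α) * ∑ i, (w i - z i) ^ 2 with hc
    have key : ∀ θ : Θ, β * (L - c) ≤ ∑ i, z i ^ 2 / (θ : Fin d → ℝ) i := by
      intro θ
      have h1 : L ≤ ∑ i, w i ^ 2 / (α + β * (θ : Fin d → ℝ) i) := hLle θ θ.2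
      have h2 : ∑ i, w i ^ 2 / (α + β * (θ : Fin d → ℝ) i)
          ≤ ∑ i, ((1 / α) * (w i - z i) ^ 2 + (1 / β) * (z i ^ 2 / (θ : Fin d → ℝ) i)) :=
        Finset.sum_le_sum fun i _ =>
          coord_ineq' (w i) (z i) α β ((θ : Fin d → ℝ) i) hα hβ (hpos θ θ.2 i)
      have h3 : ∑ i, ((1 / α) * (w i - z i) ^ 2 + (1 / β) * (z i ^ 2 / (θ : Fin d → ℝ) i))
          = c + (1 / β) * ∑ i, z i ^ 2 / (θ : Fin d → ℝ) i := by
        rw [Finset.sum_add_distrib, ← Finset.mul_sum, ← Finset.mul_sum]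
      have h4 : L ≤ c + (1 / β) * ∑ i, z i ^ 2 / (θ : Fin d → ℝ) i := by
        calc L ≤ _ := h1
          _ ≤ _ := h2
          _ = _ := h3
      have h4' := mul_le_mul_of_nonneg_left h4 hβ.le
      have hS : β * (c + 1 / β * ∑ i, z i ^ 2 / (θ : Fin d → ℝ) i)
          = β * c + ∑ i, z i ^ 2 / (θ : Fin d → ℝ) i := by
        field_simp
      nlinarith [h4', hS]
    have h5 : β * (L - c) ≤ ⨅ θ : Θ, ∑ i, z i ^ 2 / (θ : Fin d → ℝ) i := le_ciInf key
    have h6 := mul_le_mul_of_nonneg_left h5 (by positivity : (0:ℝ) ≤ 1 / β)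
    have h7 : (1 / β) * (β * (L - c)) = L - c := by field_simp
    linarith [h6, h7]
  constructor
  · -- membership : exists a minimizing z
    -- minimize h over closure Θ
    set h : (Fin d → ℝ) → ℝ := fun θ => ∑ i, w i ^ 2 / (α + β * θ i) with hh
    set K : Set (Fin d → ℝ) := closure Θ with hK
    have hKcpt : IsCompact K := hbdd.isCompact_closure
    have hKne : K.Nonempty := hne.closure
    have hKpos : ∀ θ ∈ K, ∀ i, 0 ≤ θ i := by
      intro θ hθ i
      have hcl : Θ ⊆ {θ : Fin d → ℝ | 0 ≤ θ i} := fun θ' hθ' => (hpos θ' hθ' i).le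
      have : K ⊆ {θ : Fin d → ℝ | 0 ≤ θ i} :=
        closure_minimal hcl (isClosed_le continuous_const (continuous_apply i))
      exact this hθ
    have hca : ∀ θ ∈ K, ContinuousAt h θ := by
      intro θ hθ
      have hterm : ∀ i : Fin d,
          ContinuousAt (fun θ' : Fin d → ℝ => w i ^ 2 / (α + β * θ' i)) θ := fun i =>
        ContinuousAt.div continuousAt_const
          (continuousAt_const.add (continuousAt_const.mul ((continuous_apply i).continuousAt)))
          (by have := hKpos θ hθ i; positivity)
      exact tendsto_finset_sum _ fun i _ => hterm i
    obtain ⟨θs, hθsK, hmin⟩ := hKcpt.exists_isMinOn hKne fun x hx => (hca x hx).continuousWithinAt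
    -- L = h θs
    obtain ⟨u, huΘ, hu⟩ := mem_closure_iff_seq_limit.mp hθsK
    have htend : Tendsto (fun n => h (u n)) atTop (nhds (h θs)) :=
      (hca θs hθsK).tendsto.comp hu
    have hLhs₁ : L ≤ h θs := ge_of_tendsto' htend fun n => hLle (u n) (huΘ n)
    have hLhs₂ : h θs ≤ L := by
      apply le_ciInf
      rintro ⟨φ, θ, hθ, rfl⟩
      have : h θs ≤ h θ := hmin (subset_closure hθ)
      simpa [hh] using this
    have hLhs : L = h θs := le_antisymm hLhs₁ hLhs₂
    -- the minimizer z*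
    set z : Fin d → ℝ := fun i => w i * (β * θs i) / (α + β * θs i) with hz
    have hgle : (⨅ θ : Θ, ∑ i, z i ^ 2 / (θ : Fin d → ℝ) i) ≤ ∑ i, z i ^ 2 / θs i := by
      have htends : Tendsto (fun n => ∑ i, z i ^ 2 / u n i) atTop
          (nhds (∑ i, z i ^ 2 / θs i)) := by
        apply tendsto_finset_sum
        intro i _
        rcases eq_or_lt_of_le (hKpos θs hθsK i) with h0 | h0
        · have hz0 : z i = 0 := by simp [hz, ← h0]
          have : (fun n => z i ^ 2 / u n i) = fun _ => (0:ℝ) := by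
            funext n; simp [hz0]
          rw [this, hz0]
          simpa using tendsto_const_nhds
        · exact Tendsto.div tendsto_const_nhds
            (((continuous_apply i).continuousAt).tendsto.comp hu) h0.ne'
      exact ge_of_tendsto' htends fun n =>
        ciInf_le (hgbdd z) (⟨u n, huΘ n⟩ : Θ)
    have hfinal : (1 / α) * ∑ i, (w i - z i) ^ 2 + (1 / β) * ∑ i, z i ^ 2 / θs i = h θs := by
      rw [hh]
      rw [Finset.mul_sum, Finset.mul_sum, ← Finset.sum_add_distrib]
      apply Finset.sum_congr rfl
      intro i _
      exact coord_eq (w i) α β (θs i) hα hβ (hKpos θs hθsK i)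
    refine ⟨z, ?_⟩
    rw [hsqΦ]
    have hle : (1 / α) * ∑ i, (w i - z i) ^ 2 + (1 / β) * (thetaNorm Θ z) ^ 2 ≤ L := by
      rw [hsqΘ z, hLhs, ← hfinal]
      have := mul_le_mul_of_nonneg_left hgle (by positivity : (0:ℝ) ≤ 1 / β)
      linarith
    exact le_antisymm (lower z) hle
  · rintro x ⟨z, rfl⟩
    rw [hsqΦ]
    exact lower z
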